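/- Let X be a topological space and κ a cardinal such that either κ = ω, or κ > ω and κ satisfies the partition relation κ → (κ)²₂ (i.e., κ is weakly compact). Then κ is a weak precaliber* for X if and only if every cellular family in X has cardinality less than κ. -/

import Mathlib

open Cardinal Set

universe u

/-- `κ` is a caliber for `X`: every κ-indexed family of non-empty open sets
(repetitions allowed) has a κ-sized subfamily with non-empty intersection. -/
def IsCaliber (X : Type u) [TopologicalSpace X] (κ : Cardinal.{u}) : Prop :=
  ∀ {ι : Type u} (U : ι → Set X), #ι = κ → (∀ i, IsOpen (U i)) → (∀ i, (U i).Nonempty) →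
    ∃ J : Set ι, #J = κ ∧ (⋂ i ∈ J, U i).Nonempty

/-- `κ` is a precaliber for `X`: every κ-indexed family of non-empty open sets
has a κ-sized subfamily which is centered. -/
def IsPrecaliber (X : Type u) [TopologicalSpace X] (κ : Cardinal.{u}) : Prop :=
  ∀ {ι : Type u} (U : ι → Set X), #ι = κ → (∀ i, IsOpen (U i)) → (∀ i, (U i).Nonempty) →
    ∃ J : Set ι, #J = κ ∧
      ∀ s : Finset ι, ↑s ⊆ J → s.Nonempty → (⋂ i ∈ s, U i).Nonempty

/-- `κ` is a weak precaliber for `X`: every κ-indexed family of non-empty open sets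
has a κ-sized subfamily which is linked. -/
def IsWeakPrecaliber (X : Type u) [TopologicalSpace X] (κ : Cardinal.{u}) : Prop :=
  ∀ {ι : Type u} (U : ι → Set X), #ι = κ → (∀ i, IsOpen (U i)) → (∀ i, (U i).Nonempty) →
    ∃ J : Set ι, #J = κ ∧ ∀ i ∈ J, ∀ j ∈ J, (U i ∩ U j).Nonempty

/-- `κ` is a caliber* for `X`: every family of non-empty open sets of cardinality `κ`
has a subfamily of cardinality `κ` with non-empty intersection. -/
def IsCaliberStar (X : Type u) [TopologicalSpace X] (κ : Cardinal.{u}) : Prop :=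
  ∀ 𝒰 : Set (Set X), #𝒰 = κ → (∀ U ∈ 𝒰, IsOpen U) → (∀ U ∈ 𝒰, U.Nonempty) →
    ∃ 𝒱 ⊆ 𝒰, #𝒱 = κ ∧ (⋂₀ 𝒱).Nonempty

/-- `κ` is a precaliber* for `X`: every family of non-empty open sets of cardinality `κ`
has a centered subfamily of cardinality `κ`. -/
def IsPrecaliberStar (X : Type u) [TopologicalSpace X] (κ : Cardinal.{u}) : Prop :=
  ∀ 𝒰 : Set (Set X), #𝒰 = κ → (∀ U ∈ 𝒰, IsOpen U) → (∀ U ∈ 𝒰, U.Nonempty) →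
    ∃ 𝒱 ⊆ 𝒰, #𝒱 = κ ∧
      ∀ s : Finset (Set X), ↑s ⊆ 𝒱 → s.Nonempty → (⋂₀ (↑s : Set (Set X))).Nonempty

/-- `κ` is a weak precaliber* for `X`: every family of non-empty open sets of
cardinality `κ` has a linked subfamily of cardinality `κ`. -/
def IsWeakPrecaliberStar (X : Type u) [TopologicalSpace X] (κ : Cardinal.{u}) : Prop :=
  ∀ 𝒰 : Set (Set X), #𝒰 = κ → (∀ U ∈ 𝒰, IsOpen U) → (∀ U ∈ 𝒰, U.Nonempty) →
    ∃ 𝒱 ⊆ 𝒰, #𝒱 = κ ∧ ∀ U ∈ 𝒱, ∀ V ∈ 𝒱, (U ∩ V).Nonempty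

/-- `o X` : the number of open subsets of `X`. -/
def oCard (X : Type u) [TopologicalSpace X] : Cardinal.{u} :=
  #{U : Set X | IsOpen U}

/-- A cellular family: a pairwise disjoint collection of non-empty open sets. -/
def IsCellularFamily (X : Type u) [TopologicalSpace X] (𝒰 : Set (Set X)) : Prop :=
  (∀ U ∈ 𝒰, IsOpen U) ∧ (∀ U ∈ 𝒰, U.Nonempty) ∧ 𝒰.Pairwise Disjoint

/-- The partition relation `κ → (κ)²₂`, phrased for symmetric 2-colorings of pairs. -/
def PartitionRelTwo (κ : Cardinal.{u}) : Prop :=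
  ∀ (S : Type u) (f : S → S → Bool), #S = κ → (∀ a b, f a b = f b a) →
    ∃ Y : Set S, #Y = κ ∧ ∃ c : Bool, ∀ a ∈ Y, ∀ b ∈ Y, a ≠ b → f a b = c

lemma ramsey_aleph0 : PartitionRelTwo (ℵ₀ : Cardinal.{u}) := by
  intro S f hS hsymm
  have hSinf : Infinite S := by
    rw [Cardinal.infinite_iff, hS]
  classical
  set U := Filter.hyperfilter S with hU
  -- each point gets a color
  have key : ∀ a : S, ∃ c : Bool, {b | f a b = c} ∈ U := by
    intro a
    by_cases h : {b | f a b = true} ∈ U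
    · exact ⟨true, h⟩
    · refine ⟨false, ?_⟩
      have h2 : {b | f a b = true}ᶜ ∈ U := (Ultrafilter.compl_mem_iff_notMem).2 h
      convert h2 using 1
      ext b
      simp [Bool.not_eq_true]
  choose col hcol using key
  -- a color class in the ultrafilter
  obtain ⟨c, hA⟩ : ∃ c : Bool, {a | col a = c} ∈ U := by
    rcases U.mem_or_compl_mem {a | col a = true} with h | h
    · exact ⟨true, h⟩
    · refine ⟨false, ?_⟩
      convert h using 1
      ext a
      simp [Bool.not_eq_true]
  set A : Set S := {a | col a = c} with hAdef
  have hAc : ∀ a ∈ A, {b | f a b = c} ∈ U := by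
    intro a ha
    have := hcol a
    rwa [ha] at this
  -- Zorn's lemma on linked subsets of A
  set 𝒮 : Set (Set S) := {Z | Z ⊆ A ∧ ∀ a ∈ Z, ∀ b ∈ Z, a ≠ b → f a b = c} with h𝒮
  obtain ⟨Z, hZmax⟩ : ∃ Z, Maximal (· ∈ 𝒮) Z := by
    apply zorn_subset
    intro C hC hchain
    refine ⟨⋃₀ C, ⟨?_, ?_⟩, fun s hs => subset_sUnion_of_mem hs⟩
    · intro x hx
      obtain ⟨Z, hZ, hxZ⟩ := hx
      exact (hC hZ).1 hxZ
    · intro a ha b hb hab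
      obtain ⟨Z1, hZ1, haZ⟩ := ha
      obtain ⟨Z2, hZ2, hbZ⟩ := hb
      rcases hchain.total hZ1 hZ2 with h | h
      · exact (hC hZ2).2 a (h haZ) b hbZ hab
      · exact (hC hZ1).2 a haZ b (h hbZ) hab
  obtain ⟨⟨hZA, hZlinked⟩, hmax⟩ := hZmax
  -- Z is infinite
  have hZinf : Z.Infinite := by
    intro hfin
    have hB : (A ∩ ⋂ a ∈ Z, {b | f a b = c}) ∈ U := by
      refine Filter.inter_mem hA ?_
      exact (Filter.biInter_mem hfin).2 fun a ha => hAc a (hZA ha)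
    have hBZ : ¬ (A ∩ ⋂ a ∈ Z, {b | f a b = c}) ⊆ Z := by
      intro hsub
      exact (hfin.subset hsub).notMem_hyperfilter hB
    obtain ⟨x, hxB, hxZ⟩ := Set.not_subset.1 hBZ
    have hins : insert x Z ∈ 𝒮 := by
      constructor
      · intro y hy
        rcases Set.mem_insert_iff.1 hy with rfl | hy
        · exact hxB.1
        · exact hZA hy
      · intro a ha b hb hab
        rcases Set.mem_insert_iff.1 ha with ha' | ha'
        · rcases Set.mem_insert_iff.1 hb with hb' | hb'
          · exact absurd (ha'.trans hb'.symm) hab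
          · subst ha'
            rw [hsymm]
            exact Set.mem_iInter₂.1 hxB.2 b hb'
        · rcases Set.mem_insert_iff.1 hb with hb' | hb'
          · subst hb'
            exact Set.mem_iInter₂.1 hxB.2 a ha'
          · exact hZlinked a ha' b hb' hab
    have := hmax hins (Set.subset_insert x Z)
    exact hxZ (this (Set.mem_insert x Z))
  refine ⟨Z, ?_, c, hZlinked⟩
  have := hZinf.to_subtype
  refine le_antisymm ?_ (Cardinal.aleph0_le_mk_iff.2 this)
  calc #Z ≤ #S := Cardinal.mk_set_le Z
  _ = ℵ₀ := hS

theorem stmt4 (X : Type u) [TopologicalSpace X] (κ : Cardinal.{u})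
    (hκ : κ = ℵ₀ ∨ (ℵ₀ < κ ∧ PartitionRelTwo κ)) :
    IsWeakPrecaliberStar X κ ↔ ∀ 𝒰 : Set (Set X), IsCellularFamily X 𝒰 → #𝒰 < κ := by
  classical
  have hpart : PartitionRelTwo κ := by
    rcases hκ with rfl | ⟨_, h⟩
    · exact ramsey_aleph0
    · exact h
  have hinf : ℵ₀ ≤ κ := by
    rcases hκ with rfl | ⟨h, _⟩
    · exact le_rfl
    · exact h.le
  constructor
  · -- weak precaliber* → cellular families are small
    intro hwp 𝒰 ⟨hopen, hne, hdisj⟩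
    by_contra hlt
    push_neg at hlt
    obtain ⟨p, hp⟩ := Cardinal.le_mk_iff_exists_set.1 hlt
    set 𝒰' : Set (Set X) := (↑) '' p with h𝒰'
    have h𝒰'sub : 𝒰' ⊆ 𝒰 := by
      rintro V ⟨⟨V, hV⟩, _, rfl⟩
      exact hV
    have hcard : #𝒰' = κ := by
      rw [h𝒰', Cardinal.mk_image_eq Subtype.coe_injective, hp]
    obtain ⟨𝒱, h𝒱sub, h𝒱card, h𝒱link⟩ := hwp 𝒰' hcard
      (fun V hV => hopen V (h𝒰'sub hV)) (fun V hV => hne V (h𝒰'sub hV))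
    have : Nontrivial 𝒱 := by
      rw [← Cardinal.one_lt_iff_nontrivial, h𝒱card]
      exact lt_of_lt_of_le Cardinal.one_lt_aleph0 hinf
    obtain ⟨⟨V, hV⟩, ⟨W, hW⟩, hVW⟩ := this
    have hVW' : V ≠ W := fun h => hVW (by simpa using h)
    have hd : Disjoint V W := hdisj (h𝒰'sub (h𝒱sub hV)) (h𝒰'sub (h𝒱sub hW)) hVW'
    obtain ⟨x, hx⟩ := h𝒱link V hV W hW
    exact (Set.disjoint_iff_inter_eq_empty.1 hd ▸ hx : x ∈ (∅ : Set X))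
  · -- small cellular families → weak precaliber*
    intro hcell 𝒰 hcard hopen hne
    obtain ⟨Y, hYcard, c, hYhom⟩ := hpart (↥𝒰)
      (fun U V => decide ((↑U ∩ ↑V : Set X).Nonempty)) hcard
      (fun U V => by
        show decide ((↑U ∩ ↑V : Set X).Nonempty) = decide ((↑V ∩ ↑U : Set X).Nonempty)
        rw [Set.inter_comm])
    set 𝒱 : Set (Set X) := (↑) '' Y with h𝒱
    have h𝒱sub : 𝒱 ⊆ 𝒰 := by
      rintro V ⟨⟨V, hV⟩, _, rfl⟩
      exact hV
    have h𝒱card : #𝒱 = κ := by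
      rw [h𝒱, Cardinal.mk_image_eq Subtype.coe_injective, hYcard]
    cases c with
    | true =>
      refine ⟨𝒱, h𝒱sub, h𝒱card, ?_⟩
      rintro U ⟨u, hu, rfl⟩ V ⟨v, hv, rfl⟩
      by_cases huv : u = v
      · subst huv
        simpa using hne _ u.2
      · exact of_decide_eq_true (hYhom u hu v hv huv)
    | false =>
      exfalso
      have : IsCellularFamily X 𝒱 :=
        ⟨fun V hV => hopen V (h𝒱sub hV), fun V hV => hne V (h𝒱sub hV), by
          rintro U ⟨u, hu, rfl⟩ V ⟨v, hv, rfl⟩ hUV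
          have huv : u ≠ v := fun h => hUV (by rw [h])
          have := hYhom u hu v hv huv
          rw [Set.disjoint_iff_inter_eq_empty, ← Set.not_nonempty_iff_eq_empty]
          intro hn
          exact of_decide_eq_false this hn⟩
      exact absurd (hcell 𝒱 this) (by rw [h𝒱card]; exact lt_irrefl κ)
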